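/- Under the setting of bounded per-step costs and almost-sure absorption within N steps, for any two policies π₁, π₂ over a finite policy class, if ρ(b; π₁) < ρ(b; π₂) then there exists J₀ such that for all J^F > J₀, J_{J^F}(b; π₁) < J_{J^F}(b; π₂). Consequently, any policy minimizing lim_{J^F→∞} J_{J^F}(b; π)/J^F over a finite policy class also minimizes the risk ρ(b; π). -/
import Mathlib


open Filter Topology

/-- Horizon-`n` expected total undiscounted cost with terminal failure cost `JF`
(cost `0` on goal states `G`, `JF` upon absorption in failure states `F`). -/
noncomputable def valIter {B : Type*} [Fintype B] [DecidableEq B]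
    (P : B → B → ℝ) (c : B → ℝ) (G F : Finset B) (JF : ℝ) : ℕ → B → ℝ
  | 0, b => if b ∈ F then JF else 0
  | n + 1, b =>
      if b ∈ F then JF else if b ∈ G then 0
      else c b + ∑ b' : B, P b b' * valIter P c G F JF n b'

/-- Probability of absorption in `F` within `n` steps. -/
noncomputable def riskIter {B : Type*} [Fintype B] [DecidableEq B]
    (P : B → B → ℝ) (G F : Finset B) : ℕ → B → ℝ
  | 0, b => if b ∈ F then 1 else 0
  | n + 1, b =>
      if b ∈ F then 1 else if b ∈ G then 0 else ∑ b' : B, P b b' * riskIter P G F n b'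

/-- Probability of reaching `A` within `n` steps. -/
noncomputable def reachIter {B : Type*} [Fintype B] [DecidableEq B]
    (P : B → B → ℝ) (A : Finset B) : ℕ → B → ℝ
  | 0, b => if b ∈ A then 1 else 0
  | n + 1, b => if b ∈ A then 1 else ∑ b' : B, P b b' * reachIter P A n b'

theorem risk_ordering_and_limit_minimizer
    {B : Type*} [Fintype B] [DecidableEq B]
    {Pol : Type*} [Fintype Pol]  -- finite policy class Π
    (P : Pol → B → B → ℝ) (c : Pol → B → ℝ) (G F : Finset B) (N : ℕ) (C : ℝ)
    (hdisj : Disjoint G F)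
    (hP0 : ∀ π b b', 0 ≤ P π b b') (hP1 : ∀ π b, ∑ b' : B, P π b b' = 1)
    (habsG : ∀ π, ∀ g ∈ G, P π g g = 1) (habsF : ∀ π, ∀ f ∈ F, P π f f = 1)
    (hc0 : ∀ π b, 0 ≤ c π b) (hcC : ∀ π b, c π b ≤ C)
    -- almost-sure absorption within `N` steps, under every policy and from every state
    (habsorb : ∀ π b, reachIter (P π) (G ∪ F) N b = 1)
    (b : B) :
    -- (i) strict risk ordering implies strict cost ordering for all large `J^F`
    (∀ π₁ π₂ : Pol, riskIter (P π₁) G F N b < riskIter (P π₂) G F N b →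
      ∃ J₀ : ℝ, ∀ JF : ℝ, J₀ < JF →
        valIter (P π₁) (c π₁) G F JF N b < valIter (P π₂) (c π₂) G F JF N b) ∧
    -- (ii) any policy minimizing lim_{J^F→∞} J_{J^F}(b)/J^F also minimizes the risk
    (∀ (L : Pol → ℝ),
      (∀ π, Tendsto (fun JF : ℝ => valIter (P π) (c π) G F JF N b / JF) atTop
        (nhds (L π))) →
      ∀ π₀ : Pol, (∀ π, L π₀ ≤ L π) →
        ∀ π, riskIter (P π₀) G F N b ≤ riskIter (P π) G F N b) := by
  -- valIter is affine in JF: valIter JF = riskIter * JF + valIter 0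
  have affine : ∀ (π : Pol) (JF : ℝ) (n : ℕ) (x : B),
      valIter (P π) (c π) G F JF n x =
        riskIter (P π) G F n x * JF + valIter (P π) (c π) G F 0 n x := by
    intro π JF n
    induction n with
    | zero =>
      intro x
      simp only [valIter, riskIter]
      split <;> simp
    | succ n ih =>
      intro x
      by_cases hF : x ∈ F
      · simp [valIter, riskIter, hF]
      by_cases hG : x ∈ G
      · simp [valIter, riskIter, hF, hG]
      · simp only [valIter, riskIter, if_neg hF, if_neg hG]
        rw [Finset.sum_mul]
        have : ∀ x' ∈ Finset.univ, P π x x' * valIter (P π) (c π) G F JF n x' =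
            riskIter (P π) G F n x' * JF * P π x x' +
              P π x x' * valIter (P π) (c π) G F 0 n x' := by
          intro x' _
          rw [ih x']; ring
        rw [Finset.sum_congr rfl this, Finset.sum_add_distrib]
        have h2 : ∑ x' : B, riskIter (P π) G F n x' * JF * P π x x' =
            ∑ x' : B, P π x x' * riskIter (P π) G F n x' * JF :=
          Finset.sum_congr rfl (fun _ _ => by ring)
        rw [h2]
        ring
  set r : Pol → ℝ := fun π => riskIter (P π) G F N b with hr
  set K : Pol → ℝ := fun π => valIter (P π) (c π) G F 0 N b with hK
  have hval : ∀ (π : Pol) (JF : ℝ),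
      valIter (P π) (c π) G F JF N b = r π * JF + K π := fun π JF => affine π JF N b
  have part1 : ∀ π₁ π₂ : Pol, r π₁ < r π₂ →
      ∃ J₀ : ℝ, ∀ JF : ℝ, J₀ < JF →
        valIter (P π₁) (c π₁) G F JF N b < valIter (P π₂) (c π₂) G F JF N b := by
    intro π₁ π₂ hlt
    refine ⟨(K π₁ - K π₂) / (r π₂ - r π₁), fun JF hJF => ?_⟩
    rw [hval, hval]
    have hpos : 0 < r π₂ - r π₁ := by linarith
    rw [div_lt_iff₀ hpos] at hJF
    nlinarith
  refine ⟨part1, ?_⟩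
  intro L hL π₀ hmin π
  -- identify L with r via limit uniqueness
  have hLr : ∀ π : Pol, L π = r π := by
    intro π
    have h1 : Tendsto (fun JF : ℝ => valIter (P π) (c π) G F JF N b / JF) atTop
        (nhds (r π)) := by
      have heq : ∀ᶠ JF : ℝ in atTop,
          valIter (P π) (c π) G F JF N b / JF = r π + K π / JF := by
        filter_upwards [eventually_gt_atTop (0 : ℝ)] with x hx
        rw [hval]
        field_simp
      rw [tendsto_congr' heq]
      have h2 : Tendsto (fun JF : ℝ => K π / JF) atTop (nhds 0) :=
        tendsto_const_nhds.div_atTop tendsto_id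
      simpa using tendsto_const_nhds.add h2
    exact tendsto_nhds_unique (hL π) h1
  have := hmin π
  rw [hLr, hLr] at this
  exact this
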